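/- Let n ≥ 2, let V₀ be an n-dimensional vector space over 𝔽₂, let K ⊆ V₀ be a subspace with dim(K) = κ, and let 0 ≤ m ≤ n. Then the average of |S ∩ K|² over all m-dimensional subspaces S of V₀ (uniformly chosen) equals 1 + 3(2^κ − 1)·(2^m − 1)/(2^n − 1) + (2^κ − 1)(2^κ − 2)·((2^m − 1)(2^{m−1} − 1))/((2^n − 1)(2^{n−1} − 1)), and this quantity is at most 1 + 3·2^{κ+m−n} + 4^{κ+m−n}. -/

import Mathlib

set_option linter.unusedSectionVars false
set_option maxHeartbeats 1000000

open Module Set Finset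

/-- The field with two elements. -/
abbrev F2 := ZMod 2

/-- The quantity appearing in Lemma "gamma":
`1 + 3(2^κ−1)·(2^m−1)/(2^n−1) + (2^κ−1)(2^κ−2)·((2^m−1)(2^{m−1}−1))/((2^n−1)(2^{n−1}−1))`. -/
def gammaVal (n κ m : ℕ) : ℚ :=
  1 + 3 * ((2 : ℚ) ^ κ - 1) * (((2 : ℚ) ^ m - 1) / ((2 : ℚ) ^ n - 1))
    + ((2 : ℚ) ^ κ - 1) * ((2 : ℚ) ^ κ - 2) *
        ((((2 : ℚ) ^ m - 1) * ((2 : ℚ) ^ ((m : ℤ) - 1) - 1)) /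
          (((2 : ℚ) ^ n - 1) * ((2 : ℚ) ^ ((n : ℤ) - 1) - 1)))

section Aux

variable {V : Type} [AddCommGroup V] [Module F2 V] [Module.Finite F2 V]

lemma indep_pair {x y : V} (hx : x ≠ 0) (hy : y ≠ 0) (hxy : x ≠ y) :
    LinearIndependent F2 ((↑) : ({x, y} : Set V) → V) := by
  have hxns : x ∉ ({y} : Set V) := by simpa using hxy
  show LinearIndepOn F2 id ({x, y} : Set V)
  rw [show ({x, y} : Set V) = insert x {y} from rfl, linearIndepOn_id_insert hxns]
  refine ⟨(linearIndepOn_singleton_iff F2).2 hy, ?_⟩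
  rw [Submodule.mem_span_singleton]
  rintro ⟨a, rfl⟩
  fin_cases a
  · exact hx (zero_smul F2 y)
  · exact hxy (one_smul F2 y)

lemma exists_equiv_pair (x y x' y' : V) (hx : x ≠ 0) (hy : y ≠ 0) (hxy : x ≠ y)
    (hx' : x' ≠ 0) (hy' : y' ≠ 0) (hxy' : x' ≠ y') :
    ∃ g : V ≃ₗ[F2] V, g x = x' ∧ g y = y' := by
  classical
  set li : LinearIndepOn F2 id ({x, y} : Set V) := indep_pair hx hy hxy
  set li' : LinearIndepOn F2 id ({x', y'} : Set V) := indep_pair hx' hy' hxy'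
  set s : Set V := li.extend (subset_univ _) with hs
  set s' : Set V := li'.extend (subset_univ _) with hs'
  have hxs : x ∈ s := li.subset_extend _ (by simp)
  have hys : y ∈ s := li.subset_extend _ (by simp)
  have hxs' : x' ∈ s' := li'.subset_extend _ (by simp)
  have hys' : y' ∈ s' := li'.subset_extend _ (by simp)
  let b : Basis s F2 V := Basis.extend li
  let b' : Basis s' F2 V := Basis.extend li'
  let e0 : s ≃ s' := Basis.indexEquiv b b'
  let e1 : s ≃ s' := e0.trans (Equiv.swap (e0 ⟨x, hxs⟩) ⟨x', hxs'⟩)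
  have he1x : e1 ⟨x, hxs⟩ = ⟨x', hxs'⟩ := by simp [e1]
  let e2 : s ≃ s' := e1.trans (Equiv.swap (e1 ⟨y, hys⟩) ⟨y', hys'⟩)
  have hyx : e1 ⟨y, hys⟩ ≠ ⟨x', hxs'⟩ := by
    rw [← he1x]; exact fun h => hxy (congrArg Subtype.val (e1.injective h)).symm
  have he2x : e2 ⟨x, hxs⟩ = ⟨x', hxs'⟩ := by
    simp only [e2, Equiv.trans_apply, he1x]
    rw [Equiv.swap_apply_of_ne_of_ne (Ne.symm hyx) (fun h => hxy' (congrArg Subtype.val h))]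
  have he2y : e2 ⟨y, hys⟩ = ⟨y', hys'⟩ := by simp [e2]
  refine ⟨b.equiv b' e2, ?_, ?_⟩
  · have := Basis.equiv_apply b (⟨x, hxs⟩ : s) b' e2
    rwa [Basis.extend_apply_self, he2x, Basis.extend_apply_self] at this
  · have := Basis.equiv_apply b (⟨y, hys⟩ : s) b' e2
    rwa [Basis.extend_apply_self, he2y, Basis.extend_apply_self] at this

lemma exists_equiv_single (x x' : V) (hx : x ≠ 0) (hx' : x' ≠ 0) :
    ∃ g : V ≃ₗ[F2] V, g x = x' := by
  classical
  have li : LinearIndepOn F2 id ({x} : Set V) := (linearIndepOn_singleton_iff F2).2 hx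
  have li' : LinearIndepOn F2 id ({x'} : Set V) := (linearIndepOn_singleton_iff F2).2 hx'
  set s : Set V := li.extend (subset_univ _)
  set s' : Set V := li'.extend (subset_univ _)
  have hxs : x ∈ s := li.subset_extend _ (by simp)
  have hxs' : x' ∈ s' := li'.subset_extend _ (by simp)
  let b : Basis s F2 V := Basis.extend li
  let b' : Basis s' F2 V := Basis.extend li'
  let e0 : s ≃ s' := Basis.indexEquiv b b'
  let e1 : s ≃ s' := e0.trans (Equiv.swap (e0 ⟨x, hxs⟩) ⟨x', hxs'⟩)
  have he1x : e1 ⟨x, hxs⟩ = ⟨x', hxs'⟩ := by simp [e1]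
  refine ⟨b.equiv b' e1, ?_⟩
  have := Basis.equiv_apply b (⟨x, hxs⟩ : s) b' e1
  rwa [Basis.extend_apply_self, he1x, Basis.extend_apply_self] at this

variable [Fintype V]

lemma card_mem_eq (W : Submodule F2 V) :
    Nat.card {x : V // x ∈ W} = 2 ^ finrank F2 W := by
  classical
  haveI : Fintype W := Fintype.ofFinite _
  rw [Nat.card_eq_fintype_card]
  have : Fintype.card W = Fintype.card F2 ^ finrank F2 W := card_eq_pow_finrank
  simpa [ZMod.card] using this

lemma card_shift (g : V ≃ₗ[F2] V) (m : ℕ) (x y : V) :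
    Nat.card {S : Submodule F2 V // finrank F2 S = m ∧ x ∈ S ∧ y ∈ S}
      = Nat.card {S : Submodule F2 V // finrank F2 S = m ∧ g x ∈ S ∧ g y ∈ S} := by
  apply Nat.card_congr
  refine Equiv.subtypeEquiv (Submodule.orderIsoMapComap g).toEquiv ?_
  intro S
  have h1 : finrank F2 (Submodule.map (g : V →ₗ[F2] V) S) = finrank F2 S :=
    LinearEquiv.finrank_map_eq g S
  have h2 : ∀ z : V, g z ∈ Submodule.map (g : V →ₗ[F2] V) S ↔ z ∈ S := by
    intro z
    rw [Submodule.mem_map_equiv]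
    simp
  have h3 : (Submodule.orderIsoMapComap g).toEquiv S = Submodule.map (g : V →ₗ[F2] V) S := rfl
  rw [h3, h1, h2, h2]

lemma exists_finrank_eq' (m : ℕ) (hm : m ≤ finrank F2 V) :
    ∃ S : Submodule F2 V, finrank F2 S = m := by
  let b := finBasis F2 V
  let f : Fin m → V := b ∘ Fin.castLE hm
  have hli : LinearIndependent F2 f :=
    b.linearIndependent.comp _ (Fin.castLE_injective hm)
  exact ⟨Submodule.span F2 (Set.range f), by
    rw [finrank_span_eq_card hli, Fintype.card_fin]⟩

end Aux

lemma gammaVal_eq (n κ m : ℕ) (hn : 2 ≤ n) :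
    gammaVal n κ m = 1 + 3 * ((2 : ℚ) ^ κ - 1) * (((2 : ℚ) ^ m - 1) / ((2 : ℚ) ^ n - 1))
      + ((2 : ℚ) ^ κ - 1) * ((2 : ℚ) ^ κ - 2) *
          (((2 : ℚ) ^ m - 1) * ((2 : ℚ) ^ m - 2) /
            (((2 : ℚ) ^ n - 1) * ((2 : ℚ) ^ n - 2))) := by
  have hC1 : (2 : ℚ) ^ n - 1 ≠ 0 := by
    have : (2 : ℚ) ≤ (2:ℚ) ^ n := by
      calc (2:ℚ) = 2 ^ 1 := (pow_one 2).symm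
      _ ≤ 2 ^ n := by apply pow_le_pow_right₀ (by norm_num) (by omega)
    linarith
  have hC2 : (2 : ℚ) ^ n - 2 ≠ 0 := by
    have : (4 : ℚ) ≤ (2:ℚ) ^ n := by
      calc (4:ℚ) = 2 ^ 2 := by norm_num
      _ ≤ 2 ^ n := by apply pow_le_pow_right₀ (by norm_num) hn
    linarith
  have h2m : (2 : ℚ) ^ ((m : ℤ) - 1) = (2 : ℚ) ^ m / 2 := by
    rw [zpow_sub₀ (by norm_num : (2:ℚ) ≠ 0), zpow_one, zpow_natCast]
  have h2n : (2 : ℚ) ^ ((n : ℤ) - 1) = (2 : ℚ) ^ n / 2 := by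
    rw [zpow_sub₀ (by norm_num : (2:ℚ) ≠ 0), zpow_one, zpow_natCast]
  rw [gammaVal, h2m, h2n]
  have hC2' : (2 : ℚ) ^ n / 2 - 1 ≠ 0 := by
    intro h; apply hC2; linarith
  field_simp

lemma gamma_le (n κ m : ℕ) (hn : 2 ≤ n) (hm : m ≤ n) (hκ : κ ≤ n) :
    gammaVal n κ m
      ≤ 1 + 3 * (2 : ℚ) ^ ((κ : ℤ) + (m : ℤ) - (n : ℤ)) +
          (4 : ℚ) ^ ((κ : ℤ) + (m : ℤ) - (n : ℤ)) := by
  have h2 : (2:ℚ) ≠ 0 := by norm_num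
  set A := (2:ℚ) ^ κ with hA
  set B := (2:ℚ) ^ m with hB
  set C := (2:ℚ) ^ n with hC
  have hA1 : 1 ≤ A := one_le_pow₀ (by norm_num)
  have hB1 : 1 ≤ B := one_le_pow₀ (by norm_num)
  have hC4 : 4 ≤ C := by
    calc (4:ℚ) = 2 ^ 2 := by norm_num
    _ ≤ 2 ^ n := by apply pow_le_pow_right₀ (by norm_num) hn
  have hAC : A ≤ C := pow_le_pow_right₀ (by norm_num) hκ
  have hBC : B ≤ C := pow_le_pow_right₀ (by norm_num) hm
  have hAcase : A = 1 ∨ 2 ≤ A := by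
    rcases Nat.eq_zero_or_pos κ with h | h
    · left; simp [hA, h]
    · right; calc (2:ℚ) = 2^1 := (pow_one 2).symm
        _ ≤ A := pow_le_pow_right₀ (by norm_num) h
  have hBcase : B = 1 ∨ 2 ≤ B := by
    rcases Nat.eq_zero_or_pos m with h | h
    · left; simp [hB, h]
    · right; calc (2:ℚ) = 2^1 := (pow_one 2).symm
        _ ≤ B := pow_le_pow_right₀ (by norm_num) h
  have hC1 : (0:ℚ) < C - 1 := by linarith
  have hC2 : (0:ℚ) < C - 2 := by linarith
  have hC0 : (0:ℚ) < C := by linarith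
  -- zpow rewrites
  have hz : (2:ℚ) ^ ((κ : ℤ) + (m : ℤ) - (n : ℤ)) = A * B / C := by
    rw [zpow_sub₀ h2, zpow_add₀ h2, zpow_natCast, zpow_natCast, zpow_natCast]
  have hz4 : (4:ℚ) ^ ((κ : ℤ) + (m : ℤ) - (n : ℤ)) = (A * B / C) ^ 2 := by
    have h4 : (4:ℚ) = (2:ℚ) ^ (2:ℤ) := by norm_num
    calc (4:ℚ) ^ ((κ : ℤ) + (m : ℤ) - (n : ℤ))
        = ((2:ℚ) ^ (2:ℤ)) ^ ((κ : ℤ) + (m : ℤ) - (n : ℤ)) := by rw [← h4]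
      _ = (2:ℚ) ^ ((2:ℤ) * ((κ : ℤ) + (m : ℤ) - (n : ℤ))) := (zpow_mul 2 2 _).symm
      _ = ((2:ℚ) ^ ((κ : ℤ) + (m : ℤ) - (n : ℤ))) ^ (2:ℤ) := by rw [mul_comm, zpow_mul]
      _ = (A * B / C) ^ 2 := by rw [hz, zpow_two, sq]
  rw [gammaVal_eq n κ m hn, hz, hz4]
  have key1 : (A - 1) * ((B - 1) / (C - 1)) ≤ A * B / C := by
    rw [mul_div_assoc', div_le_div_iff₀ hC1 hC0]
    nlinarith [mul_nonneg (sub_nonneg.2 hA1) (sub_nonneg.2 hBC),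
      mul_nonneg hC0.le (sub_nonneg.2 hB1)]
  have key2 : (A - 1) * (A - 2) * ((B - 1) * (B - 2) / ((C - 1) * (C - 2)))
      ≤ (A * B / C) ^ 2 := by
    have hCC : (0:ℚ) < (C - 1) * (C - 2) := mul_pos hC1 hC2
    rw [mul_div_assoc', div_pow, div_le_div_iff₀ hCC (by positivity : (0:ℚ) < C ^ 2)]
    rcases hAcase with hA' | hA'
    · rw [hA']; nlinarith [mul_pos hC1 hC2, sq_nonneg (B*C)]
    rcases hBcase with hB' | hB'
    · rw [hB']; nlinarith [mul_pos hC1 hC2, sq_nonneg (A*C)]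
    -- now 2 ≤ A, 2 ≤ B
    have e1 : (A - 1) * (B - 1) * C ≤ A * B * (C - 1) := by
      nlinarith [mul_nonneg (sub_nonneg.2 hA1) (sub_nonneg.2 hBC),
        mul_nonneg hC0.le (sub_nonneg.2 hB1)]
    have e2 : (A - 2) * (B - 2) * C ≤ A * B * (C - 2) := by
      nlinarith [mul_nonneg (sub_nonneg.2 hA') (sub_nonneg.2 hBC),
        mul_nonneg hC0.le (sub_nonneg.2 hB')]
    have p1 : (0:ℚ) ≤ (A - 1) * (B - 1) * C :=
      mul_nonneg (mul_nonneg (by linarith) (by linarith)) hC0.le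
    have p2 : (0:ℚ) ≤ (A - 2) * (B - 2) * C :=
      mul_nonneg (mul_nonneg (by linarith) (by linarith)) hC0.le
    have := mul_le_mul e1 e2 p2 (by positivity)
    calc (A - 1) * (A - 2) * ((B - 1) * (B - 2)) * (C ^ 2)
        = ((A - 1) * (B - 1) * C) * ((A - 2) * (B - 2) * C) := by ring
      _ ≤ (A * B * (C - 1)) * (A * B * (C - 2)) := this
      _ = (A * B) ^ 2 * ((C - 1) * (C - 2)) := by ring
  have hdiv : (A * B / C) ^ 2 = (A * B) ^ 2 / C ^ 2 := by rw [div_pow]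
  calc 1 + 3 * (A - 1) * ((B - 1) / (C - 1))
        + (A - 1) * (A - 2) * ((B - 1) * (B - 2) / ((C - 1) * (C - 2)))
      ≤ 1 + 3 * (A * B / C) + (A * B / C) ^ 2 := by
        have := key1
        nlinarith [key2]
    _ = 1 + 3 * (A * B / C) + (A * B / C) ^ 2 := rfl

theorem stmt6 (n κ m : ℕ) (hn : 2 ≤ n) (hm : m ≤ n)
    (V₀ : Type) [AddCommGroup V₀] [Module F2 V₀] [Module.Finite F2 V₀]
    (hdim : Module.finrank F2 V₀ = n)
    (K : Submodule F2 V₀) (hK : Module.finrank F2 K = κ) :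
    (∑ᶠ S ∈ {S : Submodule F2 V₀ | Module.finrank F2 S = m},
        (Nat.card ↥(S ⊓ K) : ℚ) ^ 2)
        / (Nat.card {S : Submodule F2 V₀ // Module.finrank F2 S = m} : ℚ)
      = gammaVal n κ m
    ∧ gammaVal n κ m
        ≤ 1 + 3 * (2 : ℚ) ^ ((κ : ℤ) + (m : ℤ) - (n : ℤ)) +
            (4 : ℚ) ^ ((κ : ℤ) + (m : ℤ) - (n : ℤ)) := by
  classical
  have hκn : κ ≤ n := by
    rw [← hK, ← hdim]; exact Submodule.finrank_le K
  refine ⟨?_, gamma_le n κ m hn hm hκn⟩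
  haveI : Finite V₀ := Module.finite_of_finite F2
  cases nonempty_fintype V₀
  haveI : Finite (Submodule F2 V₀) :=
    Finite.of_injective (fun S => (S : Set V₀)) SetLike.coe_injective
  haveI : Fintype (Submodule F2 V₀) := Fintype.ofFinite _
  set 𝒮 : Finset (Submodule F2 V₀) := Finset.univ.filter (fun S => finrank F2 S = m) with h𝒮
  set c : V₀ → V₀ → ℕ := fun x y => (𝒮.filter (fun S => x ∈ S ∧ y ∈ S)).card with hc
  set N : ℕ := 𝒮.card with hN
  set KF : Finset V₀ := Finset.univ.filter (· ∈ K) with hKF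
  obtain ⟨e₁, e₂, he₁, he₂, hne⟩ :
      ∃ e₁ e₂ : V₀, e₁ ≠ 0 ∧ e₂ ≠ 0 ∧ e₁ ≠ e₂ := by
    let b := finBasisOfFinrankEq F2 V₀ hdim
    refine ⟨b ⟨0, by omega⟩, b ⟨1, by omega⟩, b.ne_zero _, b.ne_zero _, fun h => ?_⟩
    have := b.injective h
    simp [Fin.ext_iff] at this
  set t1 : ℕ := c e₁ 0 with ht1d
  set t2 : ℕ := c e₁ e₂ with ht2d
  -- the shift invariance
  have hcount : ∀ x y : V₀,
      c x y = Nat.card {S : Submodule F2 V₀ // finrank F2 S = m ∧ x ∈ S ∧ y ∈ S} := by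
    intro x y
    rw [Nat.card_eq_fintype_card, Fintype.card_subtype]
    simp only [hc, h𝒮, Finset.filter_filter]
  have hshift : ∀ (g : V₀ ≃ₗ[F2] V₀) (x y : V₀), c x y = c (g x) (g y) := by
    intro g x y
    rw [hcount, hcount]
    exact card_shift g m x y
  have hcswap : ∀ x y : V₀, c x y = c y x := by
    intro x y; simp only [hc]; congr 1
    apply Finset.filter_congr; intro S _; exact ⟨fun h => ⟨h.2, h.1⟩, fun h => ⟨h.2, h.1⟩⟩
  have hcxx : ∀ x : V₀, c x x = c x 0 := by
    intro x; simp only [hc]; congr 1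
    apply Finset.filter_congr; intro S _
    exact ⟨fun h => ⟨h.1, S.zero_mem⟩, fun h => ⟨h.1, h.1⟩⟩
  have hc00 : c 0 0 = N := by
    simp only [hc, hN]; congr 1
    apply Finset.filter_true_of_mem; intro S _; exact ⟨S.zero_mem, S.zero_mem⟩
  have ht1 : ∀ x : V₀, x ≠ 0 → c x 0 = t1 := by
    intro x hx
    obtain ⟨g, hg⟩ := exists_equiv_single x e₁ hx he₁
    have := hshift g x 0
    rwa [hg, map_zero] at this
  have ht2 : ∀ x y : V₀, x ≠ 0 → y ≠ 0 → x ≠ y → c x y = t2 := by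
    intro x y hx hy hxy
    obtain ⟨g, hg1, hg2⟩ := exists_equiv_pair x y e₁ e₂ hx hy hxy he₁ he₂ hne
    have := hshift g x y
    rwa [hg1, hg2] at this
  -- cardinalities
  have hfiltercard : ∀ W : Submodule F2 V₀,
      (Finset.univ.filter (· ∈ W)).card = 2 ^ finrank F2 W := by
    intro W
    rw [← Fintype.card_subtype, ← Nat.card_eq_fintype_card]
    exact card_mem_eq W
  have hSmem : ∀ S ∈ 𝒮, (Finset.univ.filter (· ∈ S)).card = 2 ^ m := by
    intro S hS
    have hm' : finrank F2 S = m := by simpa [h𝒮] using hS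
    rw [hfiltercard S, hm']
  have hKcard : KF.card = 2 ^ κ := by rw [hKF, hfiltercard K, hK]
  have h2m1 : ((2 ^ m - 1 : ℕ) : ℚ) = (2:ℚ) ^ m - 1 := by
    rw [Nat.cast_sub Nat.one_le_two_pow]; push_cast; ring
  have h2k1 : ((2 ^ κ - 1 : ℕ) : ℚ) = (2:ℚ) ^ κ - 1 := by
    rw [Nat.cast_sub Nat.one_le_two_pow]; push_cast; ring
  -- membership helper sums
  have hSK : ∀ S : Submodule F2 V₀,
      (Nat.card ↥(S ⊓ K) : ℚ) = ∑ x ∈ KF, (if x ∈ S then (1:ℚ) else 0) := by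
    intro S
    rw [Finset.sum_boole]
    congr 1
    rw [card_mem_eq (S ⊓ K), ← hfiltercard (S ⊓ K)]
    congr 1
    rw [hKF, Finset.filter_filter]
    apply Finset.filter_congr
    intro x _
    rw [Submodule.mem_inf]
    tauto
  -- numerator as double sum of c
  have hnum : ∑ S ∈ 𝒮, (Nat.card ↥(S ⊓ K) : ℚ) ^ 2 = ∑ x ∈ KF, ∑ y ∈ KF, (c x y : ℚ) := by
    have step1 : ∀ S ∈ 𝒮, (Nat.card ↥(S ⊓ K) : ℚ) ^ 2
        = ∑ x ∈ KF, ∑ y ∈ KF,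
            (if x ∈ S then (1:ℚ) else 0) * (if y ∈ S then (1:ℚ) else 0) := by
      intro S _
      rw [hSK S, sq, Finset.sum_mul_sum]
    rw [Finset.sum_congr rfl step1, Finset.sum_comm]
    refine Finset.sum_congr rfl fun x _ => ?_
    rw [Finset.sum_comm]
    refine Finset.sum_congr rfl fun y _ => ?_
    have hite : ∀ S : Submodule F2 V₀,
        (if x ∈ S then (1:ℚ) else 0) * (if y ∈ S then (1:ℚ) else 0)
          = if x ∈ S ∧ y ∈ S then (1:ℚ) else 0 := by
      intro S; by_cases h1 : x ∈ S <;> by_cases h2 : y ∈ S <;> simp [h1, h2]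
    rw [Finset.sum_congr rfl (fun S _ => hite S), Finset.sum_boole]
  -- value of the double sum
  have hKF0 : (0:V₀) ∈ KF := by simp [hKF, K.zero_mem]
  set KF' := KF.erase 0 with hKF'def
  have hq : (KF'.card : ℚ) = (2:ℚ) ^ κ - 1 := by
    rw [hKF'def, Finset.card_erase_of_mem hKF0, hKcard]
    exact h2k1
  have hval : ∑ x ∈ KF, ∑ y ∈ KF, (c x y : ℚ)
      = (N : ℚ) + 3 * ((2:ℚ) ^ κ - 1) * (t1 : ℚ)
          + ((2:ℚ) ^ κ - 1) * ((2:ℚ) ^ κ - 2) * (t2 : ℚ) := by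
    have hinsert : KF = insert 0 KF' := (Finset.insert_erase hKF0).symm
    have hrow0 : ∑ y ∈ KF, (c 0 y : ℚ) = (N : ℚ) + ((2:ℚ) ^ κ - 1) * (t1 : ℚ) := by
      rw [hinsert, Finset.sum_insert (Finset.notMem_erase _ _), hc00]
      congr 1
      have : ∀ y ∈ KF', (c 0 y : ℚ) = (t1 : ℚ) := by
        intro y hy
        rw [hcswap 0 y, ht1 y (Finset.ne_of_mem_erase hy)]
      rw [Finset.sum_congr rfl this, Finset.sum_const, nsmul_eq_mul, hq]
    have hrowx : ∀ x ∈ KF', ∑ y ∈ KF, (c x y : ℚ)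
        = 2 * (t1 : ℚ) + ((2:ℚ) ^ κ - 2) * (t2 : ℚ) := by
      intro x hx
      have hxne : x ≠ 0 := Finset.ne_of_mem_erase hx
      rw [hinsert, Finset.sum_insert (Finset.notMem_erase _ _)]
      have hsplit : ∑ y ∈ KF', (c x y : ℚ)
          = (c x x : ℚ) + ∑ y ∈ KF'.erase x, (c x y : ℚ) :=
        (Finset.add_sum_erase KF' _ hx).symm
      have hrest : ∀ y ∈ KF'.erase x, (c x y : ℚ) = (t2 : ℚ) := by
        intro y hy
        have hyne : y ≠ 0 := Finset.ne_of_mem_erase (Finset.mem_of_mem_erase hy)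
        have hyx : y ≠ x := Finset.ne_of_mem_erase hy
        rw [ht2 x y hxne hyne (Ne.symm hyx)]
      have hcardxx : ((KF'.erase x).card : ℚ) = (2:ℚ) ^ κ - 2 := by
        rw [Finset.card_erase_of_mem hx]
        have h1 : 1 ≤ KF'.card := Finset.card_pos.2 ⟨x, hx⟩
        rw [Nat.cast_sub h1, hq]; ring
      rw [ht1 x hxne, hsplit, hcxx x, ht1 x hxne,
        Finset.sum_congr rfl hrest, Finset.sum_const, nsmul_eq_mul, hcardxx]
      ring
    rw [hinsert, Finset.sum_insert (Finset.notMem_erase _ _), ← hinsert, hrow0,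
      Finset.sum_congr rfl hrowx, Finset.sum_const, nsmul_eq_mul, hq]
    ring
  -- double counting 1
  set U' := (Finset.univ : Finset V₀).erase 0 with hU'def
  have hVcard : (Finset.univ : Finset V₀).card = 2 ^ n := by
    have h := hfiltercard ⊤
    rw [finrank_top, hdim] at h
    simpa using h
  have hU'cardn : U'.card = 2 ^ n - 1 := by
    rw [hU'def, Finset.card_erase_of_mem (Finset.mem_univ _), hVcard]
  have h2n1 : ((2 ^ n - 1 : ℕ) : ℚ) = (2:ℚ) ^ n - 1 := by
    rw [Nat.cast_sub Nat.one_le_two_pow]; push_cast; ring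
  have hU'card : (U'.card : ℚ) = (2:ℚ) ^ n - 1 := by rw [hU'cardn, h2n1]
  have hcol : ∀ x : V₀, (c x 0 : ℚ) = ∑ S ∈ 𝒮, (if x ∈ S then (1:ℚ) else 0) := by
    intro x
    rw [Finset.sum_boole]
    congr 1
    simp only [hc]; congr 1
    apply Finset.filter_congr; intro S _
    simp [S.zero_mem]
  have hE1 : ((2:ℚ) ^ n - 1) * (t1 : ℚ) = (N : ℚ) * ((2:ℚ) ^ m - 1) := by
    have lhs : ∑ x ∈ U', (c x 0 : ℚ) = ((2:ℚ) ^ n - 1) * (t1 : ℚ) := by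
      rw [Finset.sum_congr rfl
          (fun x hx => by rw [ht1 x (Finset.ne_of_mem_erase hx)]),
        Finset.sum_const, nsmul_eq_mul, hU'card]
    have rhs : ∑ x ∈ U', (c x 0 : ℚ) = (N : ℚ) * ((2:ℚ) ^ m - 1) := by
      rw [Finset.sum_congr rfl (fun x _ => hcol x), Finset.sum_comm]
      have hin : ∀ S ∈ 𝒮, ∑ x ∈ U', (if x ∈ S then (1:ℚ) else 0) = (2:ℚ) ^ m - 1 := by
        intro S hS
        rw [Finset.sum_boole, hU'def, Finset.filter_erase,
          Finset.card_erase_of_mem (by simp [S.zero_mem]), hSmem S hS, h2m1]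
      rw [Finset.sum_congr rfl hin, Finset.sum_const, nsmul_eq_mul]
    rw [← lhs, rhs]
  -- double counting 2
  have hE2 : ((2:ℚ) ^ n - 1) * (((2:ℚ) ^ n - 2) * (t2 : ℚ))
      = (N : ℚ) * (((2:ℚ) ^ m - 1) * ((2:ℚ) ^ m - 2)) := by
    have lhs : ∑ x ∈ U', ∑ y ∈ U'.erase x, (c x y : ℚ)
        = ((2:ℚ) ^ n - 1) * (((2:ℚ) ^ n - 2) * (t2 : ℚ)) := by
      have inner : ∀ x ∈ U', ∑ y ∈ U'.erase x, (c x y : ℚ)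
          = ((2:ℚ) ^ n - 2) * (t2 : ℚ) := by
        intro x hx
        have hxne : x ≠ 0 := Finset.ne_of_mem_erase hx
        have hterm : ∀ y ∈ U'.erase x, (c x y : ℚ) = (t2 : ℚ) := by
          intro y hy
          have hyne : y ≠ 0 := Finset.ne_of_mem_erase (Finset.mem_of_mem_erase hy)
          have hyx : y ≠ x := Finset.ne_of_mem_erase hy
          rw [ht2 x y hxne hyne (Ne.symm hyx)]
        rw [Finset.sum_congr rfl hterm, Finset.sum_const, nsmul_eq_mul,
          Finset.card_erase_of_mem hx, hU'cardn]
        congr 1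
        have h2le : 2 ≤ 2 ^ n := by
          calc 2 = 2 ^ 1 := (pow_one 2).symm
          _ ≤ 2 ^ n := Nat.pow_le_pow_right (by norm_num) (by omega)
        rw [Nat.cast_sub (by omega), Nat.cast_sub Nat.one_le_two_pow]
        push_cast; ring
      rw [Finset.sum_congr rfl inner, Finset.sum_const, nsmul_eq_mul, hU'card]
    have rhs : ∑ x ∈ U', ∑ y ∈ U'.erase x, (c x y : ℚ)
        = (N : ℚ) * (((2:ℚ) ^ m - 1) * ((2:ℚ) ^ m - 2)) := by
      have hcxy : ∀ x y : V₀, (c x y : ℚ) = ∑ S ∈ 𝒮, (if x ∈ S ∧ y ∈ S then (1:ℚ) else 0) := by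
        intro x y
        rw [Finset.sum_boole]
      simp only [hcxy]
      rw [Finset.sum_congr rfl (fun x _ => Finset.sum_comm), Finset.sum_comm]
      have hGS : ∀ S ∈ 𝒮, ∑ x ∈ U', ∑ y ∈ U'.erase x, (if x ∈ S ∧ y ∈ S then (1:ℚ) else 0)
          = ((2:ℚ) ^ m - 1) * ((2:ℚ) ^ m - 2) := by
        intro S hS
        have hinx : ∀ x ∈ U', ∑ y ∈ U'.erase x, (if x ∈ S ∧ y ∈ S then (1:ℚ) else 0)
            = if x ∈ S then ((2:ℚ) ^ m - 2) else 0 := by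
          intro x hx
          have hxne : x ≠ 0 := Finset.ne_of_mem_erase hx
          by_cases hxS : x ∈ S
          · simp only [hxS, true_and, if_true]
            rw [Finset.sum_boole]
            rw [Finset.filter_erase, hU'def, Finset.filter_erase]
            have h0mem : (0:V₀) ∈ Finset.univ.filter (· ∈ S) := by simp [S.zero_mem]
            have hxmem : x ∈ (Finset.univ.filter (· ∈ S)).erase 0 := by
              simp [hxne, hxS]
            rw [Finset.card_erase_of_mem hxmem, Finset.card_erase_of_mem h0mem, hSmem S hS]
            have h2le : 2 ≤ 2 ^ m := by
              have hlt := Finset.one_lt_card.2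
                ⟨0, h0mem, x, by simp [hxS], fun h => hxne h.symm⟩
              rwa [hSmem S hS] at hlt
            rw [Nat.cast_sub (by omega), Nat.cast_sub Nat.one_le_two_pow]
            push_cast; ring
          · simp [hxS]
        rw [Finset.sum_congr rfl hinx, ← Finset.sum_filter, Finset.sum_const, nsmul_eq_mul,
          hU'def, Finset.filter_erase, Finset.card_erase_of_mem (by simp [S.zero_mem]),
          hSmem S hS, h2m1]
      rw [Finset.sum_congr rfl hGS, Finset.sum_const, nsmul_eq_mul]
    rw [← lhs, rhs]
  -- denominator and nonemptiness
  have hden : (Nat.card {S : Submodule F2 V₀ // finrank F2 S = m} : ℚ) = (N : ℚ) := by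
    rw [Nat.card_eq_fintype_card, Fintype.card_subtype]
  have hNpos : 0 < N := by
    obtain ⟨S, hS⟩ := exists_finrank_eq' (V := V₀) m (by rw [hdim]; exact hm)
    rw [hN]; exact Finset.card_pos.2 ⟨S, by simp [h𝒮, hS]⟩
  have hfin : (∑ᶠ S ∈ {S : Submodule F2 V₀ | finrank F2 S = m},
      (Nat.card ↥(S ⊓ K) : ℚ) ^ 2) = ∑ S ∈ 𝒮, (Nat.card ↥(S ⊓ K) : ℚ) ^ 2 := by
    have hset : {S : Submodule F2 V₀ | finrank F2 S = m} = ↑𝒮 := by ext S; simp [h𝒮]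
    rw [hset, finsum_mem_coe_finset]
  rw [hfin, hden, hnum, hval]
  -- final algebra
  have hNQ : (N : ℚ) ≠ 0 := Nat.cast_ne_zero.2 hNpos.ne'
  have hC1 : (2:ℚ) ^ n - 1 ≠ 0 := by
    have : (2:ℚ) ≤ (2:ℚ) ^ n := by
      calc (2:ℚ) = 2 ^ 1 := (pow_one 2).symm
      _ ≤ 2 ^ n := by apply pow_le_pow_right₀ (by norm_num) (by omega)
    linarith
  have hC2 : (2:ℚ) ^ n - 2 ≠ 0 := by
    have : (4:ℚ) ≤ (2:ℚ) ^ n := by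
      calc (4:ℚ) = 2 ^ 2 := by norm_num
      _ ≤ 2 ^ n := by apply pow_le_pow_right₀ (by norm_num) hn
    linarith
  have ht1Q : (t1 : ℚ) = (N : ℚ) * ((2:ℚ) ^ m - 1) / ((2:ℚ) ^ n - 1) := by
    rw [eq_div_iff hC1]; linear_combination hE1
  have ht2Q : (t2 : ℚ) = (N : ℚ) * (((2:ℚ) ^ m - 1) * ((2:ℚ) ^ m - 2))
      / (((2:ℚ) ^ n - 1) * ((2:ℚ) ^ n - 2)) := by
    rw [eq_div_iff (mul_ne_zero hC1 hC2)]; linear_combination hE2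
  rw [gammaVal_eq n κ m hn, ht1Q, ht2Q]
  field_simp
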